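/- Let x ≥ γ/β and y > 0, and let S, I be the SIR solution with initial data (x, y). Then the set {t ≥ 0 : S(t) ≤ γ/β} is nonempty, its least element v(x, y) satisfies v(x, y) ≤ (ln x − ln(γ/β))/(β y). -/

import Mathlib

open Set Filter intervalIntegral MeasureTheory

/-- Integrating factor solution of a linear ODE on `[0, T]` with right derivatives. -/
lemma ode_exp_sol (T : ℝ) (hT : 0 ≤ T) (f g : ℝ → ℝ)
    (hgc : ContinuousOn g (Ici 0))
    (hf : ∀ t ∈ Icc (0:ℝ) T, HasDerivWithinAt f (g t * f t) (Ici 0) t) :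
    ∀ t ∈ Icc (0:ℝ) T, f t = f 0 * Real.exp (∫ s in (0:ℝ)..t, g s) := by
  set G : ℝ → ℝ := fun u => ∫ s in (0:ℝ)..u, g s with hGdef
  have hgT : ContinuousOn g (Icc 0 T) := hgc.mono (fun u hu => hu.1)
  have hint : IntegrableOn g (uIcc 0 T) := by
    rw [uIcc_of_le hT]; exact hgT.integrableOn_Icc
  have hGc : ContinuousOn G (Icc 0 T) := by
    have := continuousOn_primitive_interval (f := g) (μ := volume) (a := 0) (b := T) hint
    rwa [uIcc_of_le hT] at this
  have hfc : ContinuousOn f (Icc 0 T) := fun t ht =>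
    ((hf t ht).continuousWithinAt).mono (fun u hu => hu.1)
  have hGd : ∀ x ∈ Ico (0:ℝ) T, HasDerivWithinAt G (g x) (Ici x) x := by
    intro x hx
    have hii : IntervalIntegrable g volume 0 x := by
      apply ContinuousOn.intervalIntegrable
      rw [uIcc_of_le hx.1]
      exact hgT.mono (Icc_subset_Icc le_rfl hx.2.le)
    exact integral_hasDerivWithinAt_right hii
      ((hgc.mono (fun u (hu : x < u) => le_of_lt (lt_of_le_of_lt hx.1 hu))).stronglyMeasurableAtFilter_nhdsWithin
        measurableSet_Ioi x)
      ((hgc x hx.1).mono (fun u (hu : x < u) => le_of_lt (lt_of_le_of_lt hx.1 hu)))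
  have hhd : ∀ x ∈ Ico (0:ℝ) T,
      HasDerivWithinAt (fun u => f u * Real.exp (-(G u))) 0 (Ici x) x := by
    intro x hx
    have h1 : HasDerivWithinAt f (g x * f x) (Ici x) x :=
      (hf x ⟨hx.1, hx.2.le⟩).mono (Ici_subset_Ici.mpr hx.1)
    have h2 : HasDerivWithinAt (fun u => Real.exp (-(G u)))
        (Real.exp (-(G x)) * -(g x)) (Ici x) x := ((hGd x hx).neg).exp
    have h3 : HasDerivWithinAt (fun u => f u * Real.exp (-(G u)))
        (g x * f x * Real.exp (-(G x)) + f x * (Real.exp (-(G x)) * -(g x))) (Ici x) x := h1.mul h2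
    convert h3 using 1; ring
  have hcont : ContinuousOn (fun u => f u * Real.exp (-(G u))) (Icc 0 T) :=
    hfc.mul (Real.continuous_exp.comp_continuousOn hGc.neg)
  have hconst := constant_of_has_deriv_right_zero hcont hhd
  intro t ht
  have h0 : f t * Real.exp (-(G t)) = f 0 := by
    have := hconst t ht
    simpa [hGdef, intervalIntegral.integral_same] using this
  have := congrArg (· * Real.exp (G t)) h0
  simp only [mul_assoc, ← Real.exp_add, neg_add_cancel, Real.exp_zero, mul_one] at this
  exact this

/-- An SIR solution with parameters β, γ and initial data (x, y):
differentiable functions S, I on [0,∞) with S' = -βSI, I' = βSI - γI,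
S(0) = x, I(0) = y. -/
def IsSIRSolution (β γ x y : ℝ) (S I : ℝ → ℝ) : Prop :=
  S 0 = x ∧ I 0 = y ∧
  ∀ t, 0 ≤ t →
    HasDerivWithinAt S (-(β * S t * I t)) (Set.Ici 0) t ∧
    HasDerivWithinAt I (β * S t * I t - γ * I t) (Set.Ici 0) t

theorem stmt_12 (β γ x y : ℝ) (hβ : 0 < β) (hγ : 0 < γ)
    (hx : γ / β ≤ x) (hy : 0 < y)
    (S I : ℝ → ℝ) (hSI : IsSIRSolution β γ x y S I) :
    {t : ℝ | 0 ≤ t ∧ S t ≤ γ / β}.Nonempty ∧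
    ∃ v : ℝ, IsLeast {t : ℝ | 0 ≤ t ∧ S t ≤ γ / β} v ∧
      v ≤ (Real.log x - Real.log (γ / β)) / (β * y) := by
  obtain ⟨hS0, hI0, hderiv⟩ := hSI
  set c := γ / β with hc
  have hc0 : 0 < c := div_pos hγ hβ
  have hx0 : 0 < x := lt_of_lt_of_le hc0 hx
  set T0 := (Real.log x - Real.log c) / (β * y) with hT0def
  have hβy : 0 < β * y := mul_pos hβ hy
  have hT0 : 0 ≤ T0 := div_nonneg (sub_nonneg.mpr (Real.log_le_log hc0 hx)) hβy.le
  have hSc : ContinuousOn S (Ici 0) := fun t ht => (hderiv t ht).1.continuousWithinAt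
  have hIc : ContinuousOn I (Ici 0) := fun t ht => (hderiv t ht).2.continuousWithinAt
  -- formula for S
  have hSform : ∀ T, 0 ≤ T → ∀ t ∈ Icc (0:ℝ) T,
      S t = x * Real.exp (∫ s in (0:ℝ)..t, -(β * I s)) := by
    intro T hT t ht
    have := ode_exp_sol T hT S (fun s => -(β * I s))
      ((continuousOn_const.mul hIc).neg)
      (fun u hu => by
        have h := (hderiv u hu.1).1
        convert h using 1; ring) t ht
    rwa [hS0] at this
  have hSpos : ∀ t, 0 ≤ t → 0 < S t := by
    intro t ht
    rw [hSform t ht t ⟨ht, le_rfl⟩]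
    positivity
  -- key claim: ∃ t ∈ Icc 0 T0, S t ≤ c
  have hkey : ∃ t ∈ Icc (0:ℝ) T0, S t ≤ c := by
    by_contra hcon
    push_neg at hcon
    have hIform := ode_exp_sol T0 hT0 I (fun s => β * S s - γ)
      ((continuousOn_const.mul hSc).sub continuousOn_const)
      (fun u hu => by
        have h := (hderiv u hu.1).2
        convert h using 1; ring)
    have hIy : ∀ t ∈ Icc (0:ℝ) T0, y ≤ I t := by
      intro t ht
      rw [hIform t ht, hI0]
      have hG : 0 ≤ ∫ s in (0:ℝ)..t, (fun s => β * S s - γ) s := by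
        apply intervalIntegral.integral_nonneg ht.1
        intro s hs
        have hsc : c < S s := hcon s ⟨hs.1, hs.2.trans ht.2⟩
        have : γ < β * S s := by
          rwa [hc, div_lt_iff₀ hβ, mul_comm] at hsc
        simp only [sub_nonneg]
        linarith
      nlinarith [Real.one_le_exp hG, Real.exp_pos (∫ s in (0:ℝ)..t, (fun s => β * S s - γ) s)]
    have hii1 : IntervalIntegrable (fun s => -(β * I s)) volume 0 T0 := by
      apply ContinuousOn.intervalIntegrable
      rw [uIcc_of_le hT0]
      exact ((continuousOn_const.mul hIc).neg).mono (fun u hu => hu.1)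
    have hii2 : IntervalIntegrable (fun _ : ℝ => -(β * y)) volume 0 T0 :=
      intervalIntegrable_const
    have hintle : (∫ s in (0:ℝ)..T0, -(β * I s)) ≤ ∫ _ in (0:ℝ)..T0, -(β * y) := by
      apply intervalIntegral.integral_mono_on hT0 hii1 hii2
      intro s hs
      have := hIy s hs
      nlinarith
    have hconstint : (∫ _ in (0:ℝ)..T0, -(β * y)) = -(β * y) * T0 := by
      rw [intervalIntegral.integral_const]
      ring_nf
    have hST0 : S T0 ≤ c := by
      rw [hSform T0 hT0 T0 ⟨hT0, le_rfl⟩]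
      have h1 : Real.exp (∫ s in (0:ℝ)..T0, -(β * I s)) ≤ Real.exp (-(β * y) * T0) := by
        apply Real.exp_le_exp.mpr
        rw [← hconstint]
        exact hintle
      have h2 : -(β * y) * T0 = Real.log c - Real.log x := by
        rw [hT0def]
        field_simp
        ring
      have h3 : Real.exp (-(β * y) * T0) = c / x := by
        rw [h2, Real.exp_sub, Real.exp_log hc0, Real.exp_log hx0]
      calc x * Real.exp (∫ s in (0:ℝ)..T0, -(β * I s))
          ≤ x * Real.exp (-(β * y) * T0) := by nlinarith [Real.exp_pos (∫ s in (0:ℝ)..T0, -(β * I s))]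
        _ = c := by rw [h3]; field_simp
    exact absurd hST0 (not_le.mpr (hcon T0 ⟨hT0, le_rfl⟩))
  obtain ⟨t0, ht0, hSt0⟩ := hkey
  have hAset : {t : ℝ | 0 ≤ t ∧ S t ≤ c} = Ici 0 ∩ S ⁻¹' (Iic c) := by
    ext t; simp [Set.mem_inter_iff, mem_Ici, mem_Iic, mem_setOf_eq]
  have hclosed : IsClosed {t : ℝ | 0 ≤ t ∧ S t ≤ c} := by
    rw [hAset]
    exact hSc.preimage_isClosed_of_isClosed isClosed_Ici isClosed_Iic
  have hne : {t : ℝ | 0 ≤ t ∧ S t ≤ c}.Nonempty := ⟨t0, ht0.1, hSt0⟩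
  have hbdd : BddBelow {t : ℝ | 0 ≤ t ∧ S t ≤ c} := ⟨0, fun t ht => ht.1⟩
  refine ⟨hne, sInf {t : ℝ | 0 ≤ t ∧ S t ≤ c}, hclosed.isLeast_csInf hne hbdd, ?_⟩
  exact le_trans (csInf_le hbdd ⟨ht0.1, hSt0⟩) ht0.2
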